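/- arXiv:1012.2851 — 5 statements merged into one kernel-verified Lean document; each statement's English description precedes it below -/
import Mathlib

section
/- The set B̃ := { e_a − e_{g_j} − e_{a−g_j} : 1 ≤ j ≤ m, a ∈ A } generates the subgroup R of F (here e_0 = 0 by convention, so terms with a = g_j or a = 0 degenerate accordingly). -/
/-!
Let `A` be a finite abelian group. `F` is the free abelian group on the nonzero
elements of `A`, with basis elements `e a` for `a ≠ 0` and the convention `e 0 = 0`.
`R ⊆ F` is the subgroup generated by the elements `e (a + b) - e a - e b`.
Assuming `A` is the internal direct sum of nontrivial cyclic subgroups `H j` with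
generators `g j`, the set `B̃ = { e a - e (g j) - e (a - g j) }` generates `R`.
-/

/-- Basis element of the free abelian group on the nonzero elements of `A`,
with the convention `e 0 = 0`. -/
noncomputable def e {A : Type*} [AddCommGroup A] [DecidableEq A] (a : A) : ({x : A // x ≠ 0} →₀ ℤ) :=
  if h : a = 0 then 0 else Finsupp.single ⟨a, h⟩ 1

theorem closure_Btilde_eq_R {A : Type*} [AddCommGroup A] [Fintype A] [DecidableEq A]
    (m : ℕ) (g : Fin m → A) (H : Fin m → AddSubgroup A)
    (hH : ∀ j, H j = AddSubgroup.zmultiples (g j))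
    (hg : ∀ j, g j ≠ 0)
    (hInt : DirectSum.IsInternal H) :
    AddSubgroup.closure
        {x : {x : A // x ≠ 0} →₀ ℤ | ∃ (j : Fin m) (a : A), x = e a - e (g j) - e (a - g j)}
      = AddSubgroup.closure
        {x : {x : A // x ≠ 0} →₀ ℤ | ∃ a b : A, x = e (a + b) - e a - e b} := by
  set F := ({x : A // x ≠ 0} →₀ ℤ)
  set S : AddSubgroup F := AddSubgroup.closure
    {x : F | ∃ (j : Fin m) (a : A), x = e a - e (g j) - e (a - g j)} with hSdef
  apply le_antisymm
  · apply AddSubgroup.closure_le _ |>.2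
    rintro x ⟨j, a, rfl⟩
    apply AddSubgroup.subset_closure
    refine ⟨a - g j, g j, ?_⟩
    rw [sub_add_cancel]
    abel
  · -- the quotient map
    set φ : A → F ⧸ S := fun a => QuotientAddGroup.mk' S (e a) with hφ
    have key : ∀ (a : A) (j : Fin m), φ a = φ (a - g j) + φ (g j) := by
      intro a j
      have h : e a - e (g j) - e (a - g j) ∈ S :=
        AddSubgroup.subset_closure ⟨j, a, rfl⟩
      have := (QuotientAddGroup.eq_zero_iff _).2 h
      rw [← QuotientAddGroup.mk'_apply, map_sub] at this
      have h2 : φ a - φ (g j) - φ (a - g j) = 0 := this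
      rw [sub_sub, sub_eq_zero] at h2
      rw [h2]; abel
    have key' : ∀ (a : A) (j : Fin m), φ (a + g j) = φ a + φ (g j) := by
      intro a j
      have := key (a + g j) j
      rwa [add_sub_cancel_right] at this
    have hφ0 : φ 0 = 0 := by
      simp [hφ, e]
    -- every element of A is in the closure of the range of g
    have hmem : ∀ x : DirectSum (Fin m) fun j => H j,
        DirectSum.coeAddMonoidHom H x ∈ AddSubgroup.closure (Set.range g) := by
      intro x
      induction x using DirectSum.induction_on with
      | zero => rw [map_zero]; exact zero_mem _
      | of j y =>
          rw [DirectSum.coeAddMonoidHom_of]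
          have hy : (y : A) ∈ AddSubgroup.zmultiples (g j) := (hH j) ▸ y.2
          have hgj : g j ∈ AddSubgroup.closure (Set.range g) :=
            AddSubgroup.subset_closure (Set.mem_range_self j)
          exact AddSubgroup.zmultiples_le.2 hgj hy
      | add x y hx hy =>
          rw [map_add]
          exact add_mem hx hy
    have hgen : ∀ a : A, a ∈ AddSubgroup.closure (Set.range g) := by
      intro a
      obtain ⟨x, hx⟩ := hInt.surjective a
      rw [← hx]
      exact hmem x
    -- φ is additive
    have hadd : ∀ b a : A, φ (a + b) = φ a + φ b := by
      intro b
      have hb := hgen b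
      induction hb using AddSubgroup.closure_induction with
      | mem x hx =>
          obtain ⟨j, rfl⟩ := hx
          exact fun a => key' a j
      | zero => intro a; simp [hφ0]
      | add x y _ _ hx hy =>
          intro a
          rw [← add_assoc, hy, hx, hy x]
          abel
      | neg x _ hx =>
          have h1 : φ (-x) = - φ x := by
            rw [eq_neg_iff_add_eq_zero, ← hx (-x), neg_add_cancel, hφ0]
          intro a
          have h := hx (a + -x)
          rw [add_assoc, neg_add_cancel, add_zero] at h
          rw [h1, h]
          abel
    apply AddSubgroup.closure_le _ |>.2
    rintro x ⟨a, b, rfl⟩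
    have : φ (a + b) - φ a - φ b = 0 := by rw [hadd b a]; abel
    have h2 : QuotientAddGroup.mk' S (e (a + b) - e a - e b) = 0 := by
      simp only [map_sub]; exact this
    exact (QuotientAddGroup.eq_zero_iff _).1 h2
end

section
/- The set B̄ := { e_a − e_{g_j} − e_{a−g_j} : 1 ≤ j ≤ m, a ∈ A \ {g_1, …, g_m} } generates the subgroup R of F (here e_0 = 0 by convention). -/
section aux
variable {A : Type*} [AddCommGroup A] [DecidableEq A]

lemma e_zero : e (0 : A) = 0 := by simp [e]

/-- The relation element `r a b = e (a+b) - e a - e b`. -/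
noncomputable def rr (a b : A) : {x : A // x ≠ 0} →₀ ℤ := e (a + b) - e a - e b

lemma rr_cocycle (a b c : A) : rr a (b + c) = rr a b + rr (a + b) c - rr b c := by
  simp only [rr]
  rw [← add_assoc a b c]
  abel

lemma rr_zero_right (a : A) : rr a 0 = 0 := by simp [rr, e_zero]

lemma rr_neg (a b : A) : rr a (-b) = rr (-b) b - rr (a - b) b := by
  simp only [rr, ← sub_eq_add_neg, neg_add_cancel, sub_add_cancel, e_zero]
  abel

end aux

theorem closure_Bbar_eq_R {A : Type*} [AddCommGroup A] [Fintype A] [DecidableEq A]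
    (m : ℕ) (g : Fin m → A) (H : Fin m → AddSubgroup A)
    (hH : ∀ j, H j = AddSubgroup.zmultiples (g j))
    (hg : ∀ j, g j ≠ 0)
    (hInt : DirectSum.IsInternal H) :
    AddSubgroup.closure
        {x : {x : A // x ≠ 0} →₀ ℤ |
          ∃ (j : Fin m) (a : A), a ∉ Set.range g ∧ x = e a - e (g j) - e (a - g j)}
      = AddSubgroup.closure
        {x : {x : A // x ≠ 0} →₀ ℤ | ∃ a b : A, x = e (a + b) - e a - e b} := by
  set Sb : Set ({x : A // x ≠ 0} →₀ ℤ) :=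
    {x | ∃ (j : Fin m) (a : A), a ∉ Set.range g ∧ x = e a - e (g j) - e (a - g j)} with hSb
  -- 0 is not in the range of g
  have h0 : (0 : A) ∉ Set.range g := by rintro ⟨i, hi⟩; exact hg i hi
  -- differences of distinct generators are not in the range of g
  have hne : ∀ k j : Fin m, k ≠ j → g k - g j ∉ Set.range g := by
    rintro k j hkj ⟨i, hi⟩
    have hik : i ≠ k := by
      rintro rfl
      exact hg j (sub_eq_self.mp hi.symm)
    have hmk : g k ∈ H k := by rw [hH]; exact AddSubgroup.mem_zmultiples _
    have hmj : g j ∈ H j := by rw [hH]; exact AddSubgroup.mem_zmultiples _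
    have hmi : g i ∈ H i := by rw [hH]; exact AddSubgroup.mem_zmultiples _
    set y : DirectSum (Fin m) fun j => ↥(H j) :=
      DirectSum.of (fun j => ↥(H j)) k ⟨g k, hmk⟩ - DirectSum.of (fun j => ↥(H j)) j ⟨g j, hmj⟩
        - DirectSum.of (fun j => ↥(H j)) i ⟨g i, hmi⟩ with hy
    have hy0 : DirectSum.coeAddMonoidHom H y = 0 := by
      simp only [hy, map_sub, DirectSum.coeAddMonoidHom_of, hi]
      abel
    have hyz : y = 0 := hInt.injective (by rw [hy0, map_zero])
    have := congrArg (fun z : DirectSum (Fin m) fun j => ↥(H j) => z k) hyz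
    simp only [hy, DirectSum.sub_apply, DirectSum.of_eq_same,
      DirectSum.of_eq_of_ne j k _ hkj, DirectSum.of_eq_of_ne i k _ (Ne.symm hik),
      sub_zero, DirectSum.zero_apply] at this
    exact hg k (by simpa [Subtype.ext_iff] using this)
  -- every element of A is in the closure of the range of g
  have htop : ∀ b : A, b ∈ AddSubgroup.closure (Set.range g) := by
    intro b
    obtain ⟨x, hx⟩ := hInt.surjective b
    rw [← hx]; clear hx
    induction x using DirectSum.induction_on with
    | zero => simp only [map_zero]; exact zero_mem _
    | of i a =>
      obtain ⟨a, ha⟩ := a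
      rw [hH, AddSubgroup.mem_zmultiples_iff] at ha
      obtain ⟨n, rfl⟩ := ha
      rw [DirectSum.coeAddMonoidHom_of]
      exact zsmul_mem (AddSubgroup.subset_closure (Set.mem_range_self i)) n
    | add x y ihx ihy => rw [map_add]; exact add_mem ihx ihy
  -- `rr y (g j)` is in the closure of `Sb` for every `y`
  have hgen : ∀ (j : Fin m) (y : A), rr y (g j) ∈ AddSubgroup.closure Sb := by
    intro j y
    by_cases h : y + g j ∈ Set.range g
    · obtain ⟨k, hk⟩ := h
      by_cases hkj : k = j
      · subst hkj
        have : y = 0 := by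
          have := hk
          rw [right_eq_add] at this
          exact this
        subst this
        simp only [rr, e_zero, zero_add, sub_self, zero_sub, neg_zero, sub_zero]
        exact zero_mem _
      · have hy : y = g k - g j := by rw [eq_sub_iff_add_eq, hk]
        subst hy
        have m1 : (e 0 - e (g j) - e ((0:A) - g j)) ∈ AddSubgroup.closure Sb :=
          AddSubgroup.subset_closure ⟨j, 0, h0, rfl⟩
        have m2 : (e (g k - g j) - e (g k) - e (g k - g j - g k)) ∈ AddSubgroup.closure Sb :=
          AddSubgroup.subset_closure ⟨k, g k - g j, hne k j hkj, rfl⟩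
        have key : rr (g k - g j) (g j) =
            (e 0 - e (g j) - e ((0:A) - g j)) - (e (g k - g j) - e (g k) - e (g k - g j - g k)) := by
          rw [sub_right_comm (g k) (g j) (g k), sub_self, zero_sub]
          simp only [rr, sub_add_cancel, e_zero, zero_sub]
          abel
        rw [key]
        exact sub_mem m1 m2
    · refine AddSubgroup.subset_closure ⟨j, y + g j, h, ?_⟩
      rw [add_sub_cancel_right]
      simp only [rr]
      abel
  -- main step: all relations are in the closure of Sb
  have hmain : ∀ b a : A, rr a b ∈ AddSubgroup.closure Sb := by
    intro b
    refine AddSubgroup.closure_induction (p := fun x _ => ∀ a : A, rr a x ∈ AddSubgroup.closure Sb)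
      ?_ ?_ ?_ ?_ (htop b)
    · rintro x ⟨j, rfl⟩ a; exact hgen j a
    · intro a; rw [rr_zero_right]; exact zero_mem _
    · intro x y _ _ ihx ihy a
      rw [rr_cocycle]
      exact sub_mem (add_mem (ihx a) (ihy (a + x))) (ihy x)
    · intro x _ ihx a
      rw [rr_neg]
      exact sub_mem (ihx (-x)) (ihx (a - x))
  refine le_antisymm (AddSubgroup.closure_le _ |>.2 ?_) (AddSubgroup.closure_le _ |>.2 ?_)
  · rintro x ⟨j, a, ha, rfl⟩
    refine AddSubgroup.subset_closure ⟨a - g j, g j, ?_⟩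
    rw [sub_add_cancel]
    abel
  · rintro x ⟨a, b, rfl⟩
    exact hmain b a
end

section
/- Let k be a field, let M and N be additive commutative monoids, and let f : M →+ N be an additive monoid homomorphism. The induced k-algebra homomorphism φ : k[M] → k[N] between the monoid algebras, determined by φ(X^u) = X^{f(u)} on monomials, has kernel spanned as a k-vector space (and therefore generated as an ideal) by the binomials X^u − X^v for pairs u, v ∈ M with f(u) = f(v). -/
/-!
For a field `k` and an additive monoid homomorphism `f : M →+ N`, the kernel of the
induced map `φ : k[M] →+* k[N]` of monoid algebras (with `φ (X^u) = X^(f u)`) is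
spanned as a `k`-vector space, and therefore generated as an ideal, by the binomials
`X^u - X^v` with `f u = f v`.
-/

private lemma mem_span_binomials_of_mapDomain_eq_zero
    (k : Type*) [Field k] {M N : Type*} [AddCommMonoid M] [AddCommMonoid N]
    (f : M →+ N) (x : AddMonoidAlgebra k M)
    (hx : Finsupp.mapDomain f x.coeff = 0) :
    x ∈ Submodule.span k
        {x : AddMonoidAlgebra k M | ∃ u v : M, f u = f v ∧
          x = AddMonoidAlgebra.single u (1 : k) - AddMonoidAlgebra.single v (1 : k)} := by
  classical
  have sub_apply : ∀ (g h : AddMonoidAlgebra k M) (a : M), (g - h).coeff a = g.coeff a - h.coeff a :=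
    fun g h a => rfl
  have smul_apply : ∀ (c : k) (g : AddMonoidAlgebra k M) (a : M), (c • g).coeff a = c * g.coeff a :=
    fun c g a => rfl
  have single_apply : ∀ (a a' : M) (c : k),
      (AddMonoidAlgebra.single a c).coeff a' = if a = a' then c else 0 :=
    fun a a' c => Finsupp.single_apply
  have md_sub : ∀ a b : AddMonoidAlgebra k M,
      Finsupp.mapDomain (⇑f) (a - b).coeff = Finsupp.mapDomain (⇑f) a.coeff - Finsupp.mapDomain (⇑f) b.coeff :=
    fun a b => (Finsupp.mapDomain.addMonoidHom (⇑f)).map_sub a.coeff b.coeff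
  generalize hn : x.coeff.support.card = n
  induction n using Nat.strong_induction_on generalizing x with
  | _ n ih =>
    by_cases h0 : x = 0
    · simp [h0]
    obtain ⟨u, hu⟩ := Finsupp.support_nonempty_iff.mpr (mt AddMonoidAlgebra.coeff_eq_zero.mp h0)
    have hxu : x.coeff u ≠ 0 := Finsupp.mem_support_iff.mp hu
    have hcoef : (Finsupp.mapDomain f x.coeff) (f u) = 0 := by rw [hx]; rfl
    have hsum : ∑ a ∈ x.coeff.support, (if f a = f u then x.coeff a else 0) = 0 := by
      rw [Finsupp.mapDomain, Finsupp.sum_apply] at hcoef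
      simpa [Finsupp.sum, Finsupp.single_apply] using hcoef
    -- find another element of the fiber
    have hv : ∃ v ∈ x.coeff.support, v ≠ u ∧ f v = f u := by
      by_contra h
      push_neg at h
      have : ∑ a ∈ x.coeff.support, (if f a = f u then x.coeff a else 0) = x.coeff u := by
        rw [Finset.sum_eq_single_of_mem u hu (fun a ha hne => if_neg (h a ha hne)), if_pos rfl]
      rw [this] at hsum
      exact hxu hsum
    obtain ⟨v, hv, hvu, hfv⟩ := hv
    set b : AddMonoidAlgebra k M :=
      AddMonoidAlgebra.single u (1 : k) - AddMonoidAlgebra.single v (1 : k) with hb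
    set y : AddMonoidAlgebra k M := x - x.coeff u • b with hy
    have hyu : y.coeff u = 0 := by
      rw [hy, hb, sub_apply, smul_apply, sub_apply, single_apply, single_apply,
        if_pos rfl, if_neg hvu]
      ring
    have hysupp : y.coeff.support ⊆ x.coeff.support.erase u := by
      intro a ha
      have hay : y.coeff a ≠ 0 := Finsupp.mem_support_iff.mp ha
      rcases eq_or_ne a u with rfl | hau
      · exact absurd hyu hay
      refine Finset.mem_erase.mpr ⟨hau, Finsupp.mem_support_iff.mpr ?_⟩
      rcases eq_or_ne a v with rfl | hav
      · exact Finsupp.mem_support_iff.mp hv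
      · intro hxa
        apply hay
        rw [hy, hb, sub_apply, smul_apply, sub_apply, single_apply, single_apply,
          if_neg (Ne.symm hau), if_neg (Ne.symm hav), hxa]
        ring
    have hycard : y.coeff.support.card < n := by
      calc y.coeff.support.card ≤ (x.coeff.support.erase u).card := Finset.card_le_card hysupp
        _ < x.coeff.support.card := Finset.card_erase_lt_of_mem hu
        _ = n := hn
    have hyker : Finsupp.mapDomain f y.coeff = 0 := by
      have hbker : Finsupp.mapDomain f b.coeff = 0 := by
        rw [hb, md_sub]; simp [AddMonoidAlgebra.coeff_single, Finsupp.mapDomain_single, hfv]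
      have : Finsupp.mapDomain f (x.coeff u • b).coeff = 0 := by
        rw [AddMonoidAlgebra.coeff_smul, Finsupp.mapDomain_smul, hbker, smul_zero]
      rw [hy, md_sub, hx, this, sub_zero]
    have hymem := ih y.coeff.support.card hycard y hyker rfl
    have hbmem : b ∈ Submodule.span k
        {x : AddMonoidAlgebra k M | ∃ u v : M, f u = f v ∧
          x = AddMonoidAlgebra.single u (1 : k) - AddMonoidAlgebra.single v (1 : k)} :=
      Submodule.subset_span ⟨u, v, hfv.symm, hb⟩
    have : x = y + x.coeff u • b := by rw [hy]; ring
    rw [this]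
    exact Submodule.add_mem _ hymem (Submodule.smul_mem _ _ hbmem)

theorem ker_mapDomainRingHom_spanned_by_binomials
    (k : Type*) [Field k] {M N : Type*} [AddCommMonoid M] [AddCommMonoid N]
    (f : M →+ N) :
    Submodule.span k
        {x : AddMonoidAlgebra k M | ∃ u v : M, f u = f v ∧
          x = AddMonoidAlgebra.single u (1 : k) - AddMonoidAlgebra.single v (1 : k)}
      = (RingHom.ker (AddMonoidAlgebra.mapDomainRingHom k f)).restrictScalars k ∧
    Ideal.span
        {x : AddMonoidAlgebra k M | ∃ u v : M, f u = f v ∧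
          x = AddMonoidAlgebra.single u (1 : k) - AddMonoidAlgebra.single v (1 : k)}
      = RingHom.ker (AddMonoidAlgebra.mapDomainRingHom k f) := by
  set S := {x : AddMonoidAlgebra k M | ∃ u v : M, f u = f v ∧
      x = AddMonoidAlgebra.single u (1 : k) - AddMonoidAlgebra.single v (1 : k)} with hS
  have hSker : S ⊆ RingHom.ker (AddMonoidAlgebra.mapDomainRingHom k f) := by
    rintro _ ⟨u, v, huv, rfl⟩
    have : (AddMonoidAlgebra.mapDomainRingHom k f)
        (AddMonoidAlgebra.single u (1 : k) - AddMonoidAlgebra.single v (1 : k))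
        = (AddMonoidAlgebra.mapDomainRingHom k f) (AddMonoidAlgebra.single u (1 : k))
          - (AddMonoidAlgebra.mapDomainRingHom k f) (AddMonoidAlgebra.single v (1 : k)) :=
      map_sub _ _ _
    rw [SetLike.mem_coe, RingHom.mem_ker, this]
    show AddMonoidAlgebra.mapDomain (⇑f) (AddMonoidAlgebra.single u (1 : k))
        - AddMonoidAlgebra.mapDomain (⇑f) (AddMonoidAlgebra.single v (1 : k)) = 0
    rw [AddMonoidAlgebra.mapDomain_single, AddMonoidAlgebra.mapDomain_single, huv, sub_self]
  have h1 : Submodule.span k S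
      = (RingHom.ker (AddMonoidAlgebra.mapDomainRingHom k f)).restrictScalars k := by
    apply le_antisymm
    · rw [Submodule.span_le]
      exact hSker
    · intro x hx
      exact mem_span_binomials_of_mapDomain_eq_zero k f x
        (AddMonoidAlgebra.coeff_eq_zero.mpr (RingHom.mem_ker.mp hx))
  refine ⟨h1, le_antisymm (Ideal.span_le.mpr hSker) ?_⟩
  intro x hx
  have : x ∈ Submodule.span k S := by rw [h1]; exact hx
  have hle : Submodule.span k S ≤ (Ideal.span S).restrictScalars k :=
    Submodule.span_le.mpr Ideal.subset_span
  exact hle this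
end

section
/- If w : Fin n →₀ ℕ satisfies Σ_{i} w(i) • κ(i) = 0 in A, then there exists u : (A × Fin n) →₀ ℕ with div(u) = w and inc(u) = 0. (In the quiver language: every effective degree-zero label lifts to a cycle in the McKay quiver, i.e. a nonnegative integral combination of arrows with vanishing incidence.) -/
theorem exists_cycle_aux {A : Type*} [AddCommGroup A] [DecidableEq A]
    {n : ℕ} (κ : Fin n → A) (L : List (Fin n)) : ∀ a : A,
    ∃ u : A × Fin n →₀ ℕ,
      Finsupp.mapDomain Prod.snd u = Multiset.toFinsupp (L : Multiset (Fin n)) ∧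
      (u.sum fun p c => (c : ℤ) • (e (p.1 + κ p.2) - e p.1))
        = e (a + ((L.map κ).sum)) - e a := by
  induction L with
  | nil =>
      intro a
      refine ⟨0, by simp, ?_⟩
      simp [Finsupp.sum_zero_index]
  | cons i L ih =>
      intro a
      obtain ⟨u, hu1, hu2⟩ := ih (a + κ i)
      refine ⟨Finsupp.single (a, i) 1 + u, ?_, ?_⟩
      · rw [Finsupp.mapDomain_add, Finsupp.mapDomain_single, hu1]
        have : ((i :: L : List (Fin n)) : Multiset (Fin n)) = {i} + (L : Multiset (Fin n)) := by
          simp [Multiset.cons_coe]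
        rw [this, Multiset.toFinsupp_add, Multiset.toFinsupp_singleton]
      · rw [Finsupp.sum_add_index' (fun p => by simp) (fun p b c => by push_cast; rw [add_smul]),
          Finsupp.sum_single_index (by simp), hu2]
        simp only [List.map_cons, List.sum_cons, Nat.cast_one, one_smul, ← add_assoc]
        abel

theorem exists_cycle_with_label {A : Type*} [AddCommGroup A] [Fintype A] [DecidableEq A]
    {n : ℕ} (hn : 1 ≤ n) (κ : Fin n → A)
    (hκ : AddSubgroup.closure (Set.range κ) = ⊤)
    (w : Fin n →₀ ℕ) (hw : (w.sum fun i c => c • κ i) = 0) :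
    ∃ u : A × Fin n →₀ ℕ,
      Finsupp.mapDomain Prod.snd u = w ∧
      (u.sum fun p c => (c : ℤ) • (e (p.1 + κ p.2) - e p.1)) = 0 := by
  obtain ⟨u, hu1, hu2⟩ := exists_cycle_aux κ (Finsupp.toMultiset w).toList 0
  refine ⟨u, ?_, ?_⟩
  · rw [hu1, Multiset.coe_toList, Finsupp.toMultiset_toFinsupp]
  · have hsum : ((Finsupp.toMultiset w).toList.map κ).sum = 0 := by
      have h1 : ((Finsupp.toMultiset w).map κ).sum = 0 := by
        rw [Finsupp.toMultiset_map, Finsupp.sum_toMultiset,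
          Finsupp.sum_mapDomain_index (fun b => zero_smul ℕ b) (fun b m₁ m₂ => add_smul m₁ m₂ b)]
        exact hw
      rw [← Multiset.sum_coe, ← Multiset.map_coe, Multiset.coe_toList]
      exact h1
    rw [hu2, hsum, add_zero, sub_self]
end

section
/- Let k be a field. In the monoid algebra k[(A × Fin n →₀ ℕ) × R], with monomials X^{(u,v)} for u : A × Fin n →₀ ℕ and v ∈ R, let I_𝓛 be the ideal generated by all differences X^{(u₁,v₁)} − X^{(u₂,v₂)} such that div(u₁) = div(u₂) and inc(u₁) + v₁ = inc(u₂) + v₂ in F. Then the quotient k[(A × Fin n →₀ ℕ) × R]/I_𝓛 is isomorphic as a k-algebra to the monoid algebra k[(Fin n →₀ ℕ) × R], that is, to the tensor product over k of a polynomial ring in n variables with the group algebra k[R]. -/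
/-- The homomorphism `pic : F →+ A` determined by `pic (e a) = a` for `a ≠ 0`. -/
noncomputable def pic (A : Type*) [AddCommGroup A] : ({x : A // x ≠ 0} →₀ ℤ) →+ A :=
  Finsupp.liftAddHom fun s => zmultiplesHom A s.val

section Aux

variable {A : Type*} [AddCommGroup A] [DecidableEq A] {n : ℕ} (κ : Fin n → A)

lemma pic_e (a : A) : pic A (e a) = a := by
  unfold e
  split
  · simp_all [pic]
  · simp [pic]

/-- `div` as an additive monoid hom. -/
noncomputable def mcDiv : (A × Fin n →₀ ℕ) →+ (Fin n →₀ ℕ) :=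
  Finsupp.mapDomain.addMonoidHom Prod.snd

/-- `inc` as an additive monoid hom. -/
noncomputable def mcInc : (A × Fin n →₀ ℕ) →+ ({x : A // x ≠ 0} →₀ ℤ) :=
  Finsupp.liftAddHom fun p => multiplesHom _ (e (p.1 + κ p.2) - e p.1)

/-- The correction term `d ↦ Σ d i • e (κ i)`. -/
noncomputable def mcCorr : (Fin n →₀ ℕ) →+ ({x : A // x ≠ 0} →₀ ℤ) :=
  Finsupp.liftAddHom fun i => multiplesHom _ (e (κ i))

lemma mcInc_eq_sum (u : A × Fin n →₀ ℕ) :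
    mcInc κ u = u.sum fun p c => (c : ℤ) • (e (p.1 + κ p.2) - e p.1) := by
  simp only [mcInc, Finsupp.liftAddHom_apply]
  refine Finsupp.sum_congr fun p _ => ?_
  simp [natCast_zsmul]

lemma pic_mcInc (u : A × Fin n →₀ ℕ) :
    pic A (mcInc κ u) = pic A (mcCorr κ (mcDiv u)) := by
  have h : (pic A).comp (mcInc κ) = (pic A).comp ((mcCorr κ).comp mcDiv) := by
    refine Finsupp.addHom_ext fun p c => ?_
    simp [mcInc, mcCorr, mcDiv, Finsupp.mapDomain_single, pic_e, smul_sub]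
  exact DFunLike.congr_fun h u

lemma mcInc_zero_section (d : Fin n →₀ ℕ) :
    mcInc κ (Finsupp.mapDomain (fun i => ((0 : A), i)) d) = mcCorr κ d := by
  have h : (mcInc κ).comp (Finsupp.mapDomain.addMonoidHom fun i => ((0 : A), i))
      = mcCorr κ := by
    refine Finsupp.addHom_ext fun i c => ?_
    have he : e (0 : A) = 0 := by simp [e]
    simp [mcInc, mcCorr, Finsupp.mapDomain_single, he]
  exact DFunLike.congr_fun h d

/-- The second component of `φ`, as a map into `F`. -/
noncomputable def mcG : ((A × Fin n →₀ ℕ) × (pic A).ker) →+ ({x : A // x ≠ 0} →₀ ℤ) where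
  toFun m := mcInc κ m.1 + (m.2 : _) - mcCorr κ (mcDiv m.1)
  map_zero' := by simp
  map_add' a b := by
    simp only [Prod.fst_add, Prod.snd_add, map_add, AddSubgroup.coe_add]
    abel

lemma mcG_apply (m : (A × Fin n →₀ ℕ) × (pic A).ker) :
    mcG κ m = mcInc κ m.1 + (m.2 : _) - mcCorr κ (mcDiv m.1) := rfl

lemma mcG_mem (m : (A × Fin n →₀ ℕ) × (pic A).ker) : mcG κ m ∈ (pic A).ker := by
  have hv : pic A (m.2 : _) = 0 := m.2.2
  simp [mcG_apply, AddMonoidHom.mem_ker, pic_mcInc κ m.1, hv]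

/-- The monoid hom `φ : M →+ N`. -/
noncomputable def mcPhi : ((A × Fin n →₀ ℕ) × (pic A).ker) →+ ((Fin n →₀ ℕ) × (pic A).ker) where
  toFun m := (mcDiv m.1, ⟨mcG κ m, mcG_mem κ m⟩)
  map_zero' := by
    refine Prod.ext ?_ (Subtype.ext ?_) <;> simp
  map_add' a b := by
    refine Prod.ext ?_ (Subtype.ext ?_) <;>
      simp [Prod.fst_add, map_add]

lemma mcPhi_fst (m : (A × Fin n →₀ ℕ) × (pic A).ker) :
    (mcPhi κ m).1 = mcDiv m.1 := rfl

lemma mcPhi_snd (m : (A × Fin n →₀ ℕ) × (pic A).ker) :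
    ((mcPhi κ m).2 : {x : A // x ≠ 0} →₀ ℤ) = mcG κ m := rfl

/-- The monoid hom section `σ : N →+ M`. -/
noncomputable def mcSigma (A : Type*) [AddCommGroup A] [DecidableEq A] (n : ℕ) :
    ((Fin n →₀ ℕ) × (pic A).ker) →+ ((A × Fin n →₀ ℕ) × (pic A).ker) where
  toFun x := (Finsupp.mapDomain (fun i => ((0 : A), i)) x.1, x.2)
  map_zero' := by simp
  map_add' a b := by
    refine Prod.ext ?_ rfl
    simp [Prod.fst_add, Finsupp.mapDomain_add]

lemma mcDiv_section (d : Fin n →₀ ℕ) :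
    mcDiv (Finsupp.mapDomain (fun i => ((0 : A), i)) d) = d := by
  rw [mcDiv, Finsupp.mapDomain.addMonoidHom_apply, ← Finsupp.mapDomain_comp]
  exact Finsupp.mapDomain_id

lemma mcPhi_sigma (x : (Fin n →₀ ℕ) × (pic A).ker) : mcPhi κ (mcSigma A n x) = x := by
  obtain ⟨d, r⟩ := x
  refine Prod.ext ?_ (Subtype.ext ?_)
  · simpa [mcPhi_fst, mcSigma] using mcDiv_section (A := A) d
  · rw [mcPhi_snd, mcG_apply]
    show mcInc κ (Finsupp.mapDomain (fun i => ((0 : A), i)) d) + (r : _)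
        - mcCorr κ (mcDiv (Finsupp.mapDomain (fun i => ((0 : A), i)) d)) = (r : _)
    rw [mcInc_zero_section, mcDiv_section]
    abel

end Aux

set_option maxHeartbeats 1000000 in
theorem quotient_by_IL_iso_polynomial_tensor_groupAlgebra
    (k : Type*) [Field k] {A : Type*} [AddCommGroup A] [Fintype A] [DecidableEq A]
    {n : ℕ} (hn : 1 ≤ n) (κ : Fin n → A)
    (hκ : AddSubgroup.closure (Set.range κ) = ⊤) :
    Nonempty
      ((AddMonoidAlgebra k ((A × Fin n →₀ ℕ) × (pic A).ker) ⧸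
          Ideal.span
            {x : AddMonoidAlgebra k ((A × Fin n →₀ ℕ) × (pic A).ker) |
              ∃ (u₁ u₂ : A × Fin n →₀ ℕ) (v₁ v₂ : (pic A).ker),
                Finsupp.mapDomain Prod.snd u₁ = Finsupp.mapDomain Prod.snd u₂ ∧
                (u₁.sum fun p c => (c : ℤ) • (e (p.1 + κ p.2) - e p.1)) + (v₁ : _)
                  = (u₂.sum fun p c => (c : ℤ) • (e (p.1 + κ p.2) - e p.1)) + (v₂ : _) ∧
                x = AddMonoidAlgebra.single (u₁, v₁) (1 : k)
                      - AddMonoidAlgebra.single (u₂, v₂) (1 : k)})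
        ≃ₐ[k] AddMonoidAlgebra k ((Fin n →₀ ℕ) × (pic A).ker)) := by
  classical
  set S : Set (AddMonoidAlgebra k ((A × Fin n →₀ ℕ) × (pic A).ker)) :=
    {x : AddMonoidAlgebra k ((A × Fin n →₀ ℕ) × (pic A).ker) |
      ∃ (u₁ u₂ : A × Fin n →₀ ℕ) (v₁ v₂ : (pic A).ker),
        Finsupp.mapDomain Prod.snd u₁ = Finsupp.mapDomain Prod.snd u₂ ∧
        (u₁.sum fun p c => (c : ℤ) • (e (p.1 + κ p.2) - e p.1)) + (v₁ : _)
          = (u₂.sum fun p c => (c : ℤ) • (e (p.1 + κ p.2) - e p.1)) + (v₂ : _) ∧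
        x = AddMonoidAlgebra.single (u₁, v₁) (1 : k)
              - AddMonoidAlgebra.single (u₂, v₂) (1 : k)}
  set I : Ideal (AddMonoidAlgebra k ((A × Fin n →₀ ℕ) × (pic A).ker)) := Ideal.span S with hI
  have hphi_eq : ∀ (u₁ u₂ : A × Fin n →₀ ℕ) (v₁ v₂ : (pic A).ker),
      Finsupp.mapDomain Prod.snd u₁ = Finsupp.mapDomain Prod.snd u₂ →
      (u₁.sum fun p c => (c : ℤ) • (e (p.1 + κ p.2) - e p.1)) + (v₁ : _)
        = (u₂.sum fun p c => (c : ℤ) • (e (p.1 + κ p.2) - e p.1)) + (v₂ : _) →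
      mcPhi κ (u₁, v₁) = mcPhi κ (u₂, v₂) := by
    intro u₁ u₂ v₁ v₂ hd hF
    have hd' : mcDiv u₁ = mcDiv u₂ := hd
    rw [← mcInc_eq_sum, ← mcInc_eq_sum] at hF
    refine Prod.ext ?_ (Subtype.ext ?_)
    · simpa [mcPhi_fst] using hd'
    · rw [mcPhi_snd, mcPhi_snd, mcG_apply, mcG_apply]
      show mcInc κ u₁ + (v₁ : _) - mcCorr κ (mcDiv u₁)
          = mcInc κ u₂ + (v₂ : _) - mcCorr κ (mcDiv u₂)
      rw [hd', hF]
  have hphi_rev : ∀ (m₁ m₂ : (A × Fin n →₀ ℕ) × (pic A).ker),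
      mcPhi κ m₁ = mcPhi κ m₂ →
      AddMonoidAlgebra.single m₁ (1 : k) - AddMonoidAlgebra.single m₂ (1 : k) ∈ S := by
    intro m₁ m₂ h
    have hd : mcDiv m₁.1 = mcDiv m₂.1 := congrArg Prod.fst h
    have hg : mcG κ m₁ = mcG κ m₂ :=
      congrArg (fun x => ((x.2 : (pic A).ker) : {x : A // x ≠ 0} →₀ ℤ)) h
    rw [mcG_apply, mcG_apply, hd] at hg
    have hF : mcInc κ m₁.1 + (m₁.2 : _) = mcInc κ m₂.1 + (m₂.2 : _) :=
      sub_left_injective hg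
    refine ⟨m₁.1, m₂.1, m₁.2, m₂.2, hd, ?_, by simp⟩
    rw [← mcInc_eq_sum, ← mcInc_eq_sum]
    exact hF
  set Φ : AddMonoidAlgebra k ((A × Fin n →₀ ℕ) × (pic A).ker)
      →ₐ[k] AddMonoidAlgebra k ((Fin n →₀ ℕ) × (pic A).ker) :=
    AddMonoidAlgebra.mapDomainAlgHom k k (mcPhi κ) with hΦ
  have hIker : ∀ a ∈ I, Φ a = 0 := by
    intro a ha
    have hle : I ≤ RingHom.ker Φ := by
      rw [hI, Ideal.span_le]
      rintro x ⟨u₁, u₂, v₁, v₂, hd, hF, rfl⟩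
      have hp := hphi_eq u₁ u₂ v₁ v₂ hd hF
      simp only [SetLike.mem_coe, RingHom.mem_ker]
      simp only [hΦ, map_sub, AddMonoidAlgebra.mapDomainAlgHom_apply,
        Finsupp.mapDomain_single, AddMonoidAlgebra.mapDomain_single, hp, sub_self]
    exact hle ha
  set Φ' := Ideal.Quotient.liftₐ I Φ hIker with hΦ'
  set Ψ : AddMonoidAlgebra k ((Fin n →₀ ℕ) × (pic A).ker)
      →ₐ[k] (AddMonoidAlgebra k ((A × Fin n →₀ ℕ) × (pic A).ker) ⧸ I) :=
    (Ideal.Quotient.mkₐ k I).comp (AddMonoidAlgebra.mapDomainAlgHom k k (mcSigma A n)) with hΨ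
  refine ⟨AlgEquiv.ofAlgHom Φ' Ψ ?_ ?_⟩
  · refine AddMonoidAlgebra.algHom_ext (fun x => ?_) (Subsingleton.elim _ _)
    simp [hΨ, hΦ', hΦ, Ideal.Quotient.liftₐ_apply, Ideal.Quotient.mkₐ_eq_mk,
      Finsupp.mapDomain_single, AddMonoidAlgebra.mapDomain_single, mcPhi_sigma]
    erw [Ideal.Quotient.lift_mk]
    simp [Finsupp.mapDomain_single, AddMonoidAlgebra.mapDomain_single, mcPhi_sigma]
  · refine Ideal.Quotient.algHom_ext k (AddMonoidAlgebra.algHom_ext (fun m => ?_) (Subsingleton.elim _ _))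
    simp only [AlgHom.comp_apply, Ideal.Quotient.mkₐ_eq_mk, hΦ', Ideal.Quotient.liftₐ_apply,
      Ideal.Quotient.lift_mk, AlgHom.coe_toRingHom, hΦ,
      AddMonoidAlgebra.mapDomainAlgHom_apply, Finsupp.mapDomain_single, AddMonoidAlgebra.mapDomain_single, hΨ,
      AlgHom.id_apply]
    erw [Ideal.Quotient.lift_mk]
    simp [Finsupp.mapDomain_single, AddMonoidAlgebra.mapDomain_single, mcPhi_sigma]
    rw [Ideal.Quotient.mk_eq_mk_iff_sub_mem]
    exact Ideal.subset_span (hphi_rev _ _ (mcPhi_sigma κ (mcPhi κ m)))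
end
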